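/- Let L be a compact Hausdorff space and V ⊆ L an open subset that is an Fσ set and is metrizable in the subspace topology. Then there exists a metric space Z and a continuous map g : L → Z such that g is injective on V and g(V) ∩ g(L \ V) = ∅. -/

import Mathlib

open TopologicalSpace Set


/-- If `V` is an open, `Fσ`, metrizable subset of a compact Hausdorff space `L`,
then there are a metric space `Z` and a continuous `g : L → Z` injective on `V` with
`g(V) ∩ g(L \ V) = ∅`. -/
theorem stmt4 {L : Type*} [TopologicalSpace L] [CompactSpace L] [T2Space L]
    (V : Set L) (hVopen : IsOpen V)
    (hFsigma : ∃ F : ℕ → Set L, (∀ n, IsClosed (F n)) ∧ V = ⋃ n, F n)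
    (hmetr : TopologicalSpace.MetrizableSpace ↥V) :
    ∃ (Z : Type) (_ : MetricSpace Z) (g : L → Z),
      Continuous g ∧ Set.InjOn g V ∧ (g '' V) ∩ (g '' Vᶜ) = ∅ := by
  classical
  obtain ⟨F, hFc, hFV⟩ := hFsigma
  set K : ℕ → Set L := Set.accumulate F with hKdef
  have hKc : ∀ n, IsClosed (K n) := by
    intro n
    rw [hKdef, Set.accumulate_def]
    exact Set.Finite.isClosed_biUnion (Set.finite_Iic n) fun k _ => hFc k
  have hKV : ∀ n, K n ⊆ V := by
    intro n
    rw [hKdef, Set.accumulate_def]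
    exact Set.iUnion₂_subset fun k _ => hFV ▸ Set.subset_iUnion F k
  have hmem : ∀ x ∈ V, ∃ n, x ∈ K n := by
    intro x hx
    rw [hFV] at hx
    obtain ⟨n, hn⟩ := Set.mem_iUnion.mp hx
    exact ⟨n, Set.subset_accumulate hn⟩
  have hmono : Monotone K := Set.monotone_accumulate
  -- For each n, a countable family of continuous functions on L injective on K n
  have key : ∀ n, ∃ E : ℕ → C(L, ℝ),
      Set.InjOn (fun x => (fun m => E m x : ℕ → ℝ)) (K n) := by
    intro n
    haveI : CompactSpace ↥(K n) := isCompact_iff_compactSpace.mp (hKc n).isCompact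
    haveI : MetrizableSpace ↥(K n) := (Topology.IsEmbedding.inclusion (hKV n)).metrizableSpace
    letI := metrizableSpaceMetric ↥(K n)
    obtain ⟨e, he⟩ := exists_embedding_l_infty ↥(K n)
    have hcont : ∀ m, Continuous fun x : ↥(K n) => e x m := fun m =>
      (continuous_eval_const m).comp he.continuous
    choose E hE using fun m =>
      ContinuousMap.exists_restrict_eq (hKc n) (⟨fun x => e x m, hcont m⟩ : C(↥(K n), ℝ))
    refine ⟨E, fun x hx y hy hxy => ?_⟩
    have : e ⟨x, hx⟩ = e ⟨y, hy⟩ := by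
      ext m
      have h1 := congrFun (congrArg DFunLike.coe (hE m)) ⟨x, hx⟩
      have h2 := congrFun (congrArg DFunLike.coe (hE m)) ⟨y, hy⟩
      simp only [ContinuousMap.restrict_apply, ContinuousMap.coe_mk] at h1 h2
      rw [← h1, ← h2]
      exact congrFun hxy m
    exact Subtype.mk.injEq .. ▸ (he.injective this)
  choose E hEinj using key
  -- Urysohn functions separating K n from Vᶜ
  have hU : ∀ n, ∃ u : C(L, ℝ), Set.EqOn u 0 (K n) ∧ Set.EqOn u 1 Vᶜ := by
    intro n
    obtain ⟨u, hu0, hu1, -⟩ := exists_continuous_zero_one_of_isClosed (hKc n)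
      hVopen.isClosed_compl
      (Set.disjoint_left.mpr fun x hx hx' => hx' (hKV n hx))
    exact ⟨u, hu0, hu1⟩
  choose u hu0 hu1 using hU
  refine ⟨(ℕ × ℕ → ℝ) × (ℕ → ℝ), metrizableSpaceMetric _,
    fun x => (fun p => E p.1 p.2 x, fun n => u n x), ?_, ?_, ?_⟩
  · exact Continuous.prodMk
      (continuous_pi fun p => (E p.1 p.2).continuous)
      (continuous_pi fun n => (u n).continuous)
  · intro x hx y hy hxy
    obtain ⟨a, ha⟩ := hmem x hx
    obtain ⟨b, hb⟩ := hmem y hy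
    have hxN : x ∈ K (max a b) := hmono (le_max_left a b) ha
    have hyN : y ∈ K (max a b) := hmono (le_max_right a b) hb
    refine hEinj (max a b) hxN hyN ?_
    funext m
    exact congrFun (congrArg Prod.fst hxy) (max a b, m)
  · rw [Set.eq_empty_iff_forall_notMem]
    rintro z ⟨⟨x, hx, rfl⟩, ⟨y, hy, hxy⟩⟩
    obtain ⟨n, hn⟩ := hmem x hx
    have h1 : u n x = 0 := hu0 n hn
    have h2 : u n y = 1 := hu1 n hy
    have : u n y = u n x := congrFun (congrArg Prod.snd hxy) n
    rw [h1, h2] at this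
    exact one_ne_zero this
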